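/- Let T : H₁ → H₂ be a bounded linear operator between real Hilbert spaces with ||T|| = 1. Then the norm attainment set M_T = {x : ||x|| = 1, ||Tx|| = 1}, if nonempty, is of the form S_{H₀} for some subspace H₀ of H₁, i.e., M_T ∪ {0} is closed under scalar multiplication by unit scalars and the set of norm-attaining directions forms a linear subspace. -/

import Mathlib

open ContinuousLinearMap

/-- For a norm-one bounded operator between real Hilbert spaces, the norm attainment set,
if nonempty, is the unit sphere of some subspace `H₀` of `H₁`. -/
theorem stmt13 {H₁ H₂ : Type*}
    [NormedAddCommGroup H₁] [InnerProductSpace ℝ H₁] [CompleteSpace H₁]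
    [NormedAddCommGroup H₂] [InnerProductSpace ℝ H₂] [CompleteSpace H₂]
    (T : H₁ →L[ℝ] H₂) (hT : ‖T‖ = 1)
    (hne : {x : H₁ | ‖x‖ = 1 ∧ ‖T x‖ = 1}.Nonempty) :
    ∃ H₀ : Submodule ℝ H₁,
      {x : H₁ | ‖x‖ = 1 ∧ ‖T x‖ = 1} = {x : H₁ | x ∈ H₀ ∧ ‖x‖ = 1} := by
  set S := ContinuousLinearMap.adjoint T with hS
  refine ⟨LinearMap.ker (((S ∘L T - ContinuousLinearMap.id ℝ H₁) : H₁ →L[ℝ] H₁) : H₁ →ₗ[ℝ] H₁), ?_⟩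
  ext x
  have hmem : x ∈ LinearMap.ker (((S ∘L T - ContinuousLinearMap.id ℝ H₁) : H₁ →L[ℝ] H₁) : H₁ →ₗ[ℝ] H₁)
      ↔ S (T x) = x := by
    simp [LinearMap.mem_ker, sub_eq_zero]
  have hinner : (inner ℝ (S (T x)) x : ℝ) = ‖T x‖ ^ 2 := by
    rw [hS, ContinuousLinearMap.adjoint_inner_left, real_inner_self_eq_norm_sq]
  constructor
  · rintro ⟨hx, hTx⟩
    refine ⟨hmem.mpr ?_, hx⟩
    have hSnorm : ‖S‖ = 1 := by rw [hS]; rw [LinearIsometryEquiv.norm_map ContinuousLinearMap.adjoint T, hT]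
    have h1 : ‖S (T x)‖ ≤ 1 := by
      calc ‖S (T x)‖ ≤ ‖S‖ * ‖T x‖ := S.le_opNorm _
        _ = 1 := by rw [hSnorm, hTx, one_mul]
    have h2 : ‖S (T x) - x‖ ^ 2 = ‖S (T x)‖ ^ 2 - 2 * inner ℝ (S (T x)) x + ‖x‖ ^ 2 := by
      rw [norm_sub_sq_real]
    have h3 : ‖S (T x) - x‖ ^ 2 ≤ 0 := by
      rw [h2, hinner, hTx, hx]; nlinarith [h1, norm_nonneg (S (T x))]
    have h4 : ‖S (T x) - x‖ = 0 := by nlinarith [norm_nonneg (S (T x) - x)]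
    rwa [norm_eq_zero, sub_eq_zero] at h4
  · rintro ⟨hker, hx⟩
    refine ⟨hx, ?_⟩
    have := hmem.mp hker
    have h5 : ‖T x‖ ^ 2 = 1 := by
      rw [← hinner, this, real_inner_self_eq_norm_sq, hx]; norm_num
    nlinarith [norm_nonneg (T x)]
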